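/- Let n ≥ 1 and ω ∈ ℝ be such that h_n(ω) = 0 and h_{n−1}(ω) ≠ 0. Then for all x ∈ ℂ, p̃_{n+1}(x; ω) = i (h_n'(ω)/h_{n−1}(ω)) p̃_n(x; ω); that is, p̃_{n+1}(·; ω) is a scalar multiple of p̃_n(·; ω) at such critical values of ω (primes denote derivatives with respect to ω). -/

import Mathlib

open MeasureTheory Matrix Finset intervalIntegral Metric

/-- Moments of the oscillatory weight `e^{iωx}` on `[-1,1]`. -/
noncomputable def mu (ω : ℝ) (n : ℕ) : ℂ :=
  ∫ x : ℝ in (-1 : ℝ)..1, (x : ℂ) ^ n * Complex.exp (Complex.I * ω * x)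

/-- The `(n+1) × (n+1)` Hankel determinant of the moments. -/
noncomputable def hankel (n : ℕ) (ω : ℝ) : ℂ :=
  Matrix.det (Matrix.of fun j k : Fin (n + 1) => mu ω ((j : ℕ) + (k : ℕ)))

/-- The renormalized orthogonal polynomial `p̃_n(x; ω) = h_{n-1}(ω) p_n(x; ω)`,
as a Hankel-type determinant with last column `(1, x, …, x^n)`. -/
noncomputable def ptil (n : ℕ) (ω : ℝ) (x : ℂ) : ℂ :=
  Matrix.det (Matrix.of fun j k : Fin (n + 1) =>
    if (k : ℕ) = n then x ^ (j : ℕ) else mu ω ((j : ℕ) + (k : ℕ)))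

lemma hasDerivAt_mu (m : ℕ) (ω : ℝ) :
    HasDerivAt (fun ω : ℝ => mu ω m) (Complex.I * mu ω (m + 1)) ω := by
  have key := intervalIntegral.hasDerivAt_integral_of_dominated_loc_of_deriv_le
    (F := fun (ω : ℝ) (x : ℝ) => (x : ℂ) ^ m * Complex.exp (Complex.I * ω * x))
    (F' := fun (ω : ℝ) (x : ℝ) => Complex.I * ((x : ℂ) ^ (m+1) * Complex.exp (Complex.I * ω * x)))
    (x₀ := ω) (a := (-1:ℝ)) (b := 1) (μ := volume) (bound := fun _ => 1)
    (s := Metric.ball ω 1) (Metric.ball_mem_nhds ω one_pos) ?_ ?_ ?_ ?_ ?_ ?_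
  · have h2 := key.2
    rw [intervalIntegral.integral_const_mul] at h2
    exact h2
  · filter_upwards with ω'
    apply Continuous.aestronglyMeasurable
    fun_prop
  · apply Continuous.intervalIntegrable
    fun_prop
  · apply Continuous.aestronglyMeasurable
    fun_prop
  · filter_upwards with t ht ω' _
    have h1 : ‖(t:ℂ)‖ ≤ 1 := by
      rw [Complex.norm_real]
      rw [Set.uIoc_of_le (by norm_num : (-1:ℝ) ≤ 1)] at ht
      rw [Real.norm_eq_abs, abs_le]
      exact ⟨le_of_lt ht.1, ht.2⟩
    have he : ‖Complex.exp (Complex.I * ω' * t)‖ = 1 := by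
      rw [Complex.norm_exp]
      simp [Complex.mul_re]
    have hp : ‖(t:ℂ) ^ (m+1)‖ ≤ 1 := by
      rw [norm_pow]; exact pow_le_one₀ (norm_nonneg _) h1
    rw [norm_mul, norm_mul, he, Complex.norm_I, one_mul, mul_one]
    exact hp
  · apply Continuous.intervalIntegrable; fun_prop
  · filter_upwards with t ht ω' _
    have h1 : HasDerivAt (fun y : ℝ => Complex.I * (y:ℂ) * t) (Complex.I * t) ω' := by
      simpa using ((Complex.ofRealCLM.hasDerivAt (x := ω')).const_mul Complex.I).mul_const (t:ℂ)
    have h2 := h1.cexp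
    have h3 := h2.const_mul ((t:ℂ)^m)
    exact h3.congr_deriv (by ring)

lemma hasDerivAt_det {N : ℕ} (M : ℝ → Matrix (Fin N) (Fin N) ℂ)
    (M' : Matrix (Fin N) (Fin N) ℂ) (ω : ℝ)
    (h : ∀ p q, HasDerivAt (fun ω => M ω p q) (M' p q) ω) :
    HasDerivAt (fun ω => (M ω).det)
      (∑ q, ((M ω).updateCol q (fun p => M' p q)).det) ω := by
  have hσ : ∀ σ : Equiv.Perm (Fin N), HasDerivAt (fun ω => ∏ i, M ω (σ i) i)
      (∑ q, (∏ j ∈ univ.erase q, M ω (σ j) j) * M' (σ q) q) ω := by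
    intro σ
    have := HasDerivAt.fun_finsetProd (u := univ) (f := fun i (ω : ℝ) => M ω (σ i) i)
      (f' := fun i => M' (σ i) i) (x := ω) (fun i _ => h (σ i) i)
    simpa [smul_eq_mul] using this
  have hsum : HasDerivAt
      (fun ω => ∑ σ : Equiv.Perm (Fin N),
        ((Equiv.Perm.sign σ : ℤ) : ℂ) * ∏ i, M ω (σ i) i)
      (∑ σ : Equiv.Perm (Fin N), ((Equiv.Perm.sign σ : ℤ) : ℂ) *
        ∑ q, (∏ j ∈ univ.erase q, M ω (σ j) j) * M' (σ q) q) ω :=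
    HasDerivAt.fun_sum (fun σ _ => (hσ σ).const_mul _)
  have hfun : (fun ω => (M ω).det) = (fun ω => ∑ σ : Equiv.Perm (Fin N),
      ((Equiv.Perm.sign σ : ℤ) : ℂ) * ∏ i, M ω (σ i) i) := by
    funext ω'; exact det_apply' (M ω')
  rw [hfun]
  convert hsum using 1
  simp_rw [Finset.mul_sum]
  rw [Finset.sum_comm]
  refine Finset.sum_congr rfl fun q _ => ?_
  rw [det_apply' ((M ω).updateCol q (fun p => M' p q))]
  refine Finset.sum_congr rfl fun σ _ => ?_
  rw [← Finset.mul_prod_erase _ _ (Finset.mem_univ q)]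
  have h1 : ((M ω).updateCol q fun p => M' p q) (σ q) q = M' (σ q) q := by
    simp [Matrix.updateCol_apply]
  have h2 : ∏ j ∈ univ.erase q, ((M ω).updateCol q fun p => M' p q) (σ j) j
      = ∏ j ∈ univ.erase q, M ω (σ j) j := by
    refine Finset.prod_congr rfl fun j hj => ?_
    simp [Matrix.updateCol_apply, (Finset.mem_erase.mp hj).1]
  rw [h1, h2]
  ring

/-- Degeneracy at critical values of `ω` (indices shifted: original `n ≥ 1` corresponds to
`n + 1` here, so `h_n, h_{n-1}, p̃_{n+1}, p̃_n` become `hankel (n+1), hankel n,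
ptil (n+2), ptil (n+1)`). -/
theorem stmt9 (n : ℕ) (ω : ℝ)
    (h1 : hankel (n + 1) ω = 0) (h0 : hankel n ω ≠ 0) :
    ∀ x : ℂ, ptil (n + 2) ω x =
      Complex.I * (deriv (hankel (n + 1)) ω / hankel n ω) * ptil (n + 1) ω x := by
  intro x
  -- the Hankel matrix of size n+2
  set H : Matrix (Fin (n + 2)) (Fin (n + 2)) ℂ :=
    Matrix.of (fun j k : Fin (n + 2) => mu ω ((j : ℕ) + (k : ℕ))) with hH
  have hHdet : H.det = 0 := h1
  have hHsymm : Hᵀ = H := by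
    ext j k; simp only [hH, transpose_apply, of_apply]; rw [Nat.add_comm]
  -- the kernel-related vector
  set w : Fin (n + 2) → ℂ := fun k => adjugate H k (Fin.last (n + 1)) with hw
  -- S
  set S : ℂ := (H.updateRow (Fin.last (n + 1)) (fun k => mu ω (n + 2 + (k : ℕ)))).det with hS
  -- (F1)
  have F1 : ∀ j : Fin (n + 2), ∑ k, H j k * w k = 0 := by
    intro j
    have := congrFun (congrFun (mul_adjugate H) j) (Fin.last (n + 1))
    rw [hHdet] at this
    simpa [Matrix.mul_apply, hw] using this
  -- (F2)
  have F2 : w (Fin.last (n + 1)) = hankel n ω := by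
    show adjugate H (Fin.last (n+1)) (Fin.last (n+1)) = _
    rw [adjugate_apply]
    rw [det_succ_row _ (Fin.last (n + 1))]
    rw [Finset.sum_eq_single (Fin.last (n + 1))]
    · simp only [updateRow_self, Pi.single_eq_same]
      have hsign : ((-1 : ℂ)) ^ ((Fin.last (n + 1) : ℕ) + (Fin.last (n + 1) : ℕ)) = 1 :=
        Even.neg_one_pow ⟨n + 1, by simp⟩
      rw [hsign, one_mul, one_mul]
      show det _ = det _
      congr 1
      ext j k
      simp only [submatrix_apply, Fin.succAbove_last, of_apply]
      rw [Matrix.updateRow_ne (by exact (Fin.castSucc_lt_last j).ne)]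
      simp [hH]
    · intro b _ hb
      simp only [updateRow_self]
      rw [Pi.single_eq_of_ne hb]
      ring
    · simp
  -- (F3)
  have hwc : ∀ k : Fin (n + 2), w k = cramer Hᵀ (Pi.single k 1) (Fin.last (n + 1)) :=
    fun k => rfl
  have F3 : ∑ k, w k * mu ω (n + 2 + (k : ℕ)) = S := by
    have e1 : ∑ k, w k * mu ω (n + 2 + (k : ℕ)) =
        (cramer Hᵀ ((∑ k : Fin (n + 2), mu ω (n + 2 + (k : ℕ)) • (Pi.single k (1 : ℂ) : Fin (n + 2) → ℂ) :
          Fin (n + 2) → ℂ)))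
          (Fin.last (n + 1)) := by
      rw [map_sum, Finset.sum_apply]
      refine Finset.sum_congr rfl fun k _ => ?_
      rw [LinearMap.map_smul, Pi.smul_apply, ← hwc k, smul_eq_mul, mul_comm]
    have e2 : ((∑ k : Fin (n + 2), mu ω (n + 2 + (k : ℕ)) • (Pi.single k (1 : ℂ) : Fin (n + 2) → ℂ) :
          Fin (n + 2) → ℂ)) =
        fun k : Fin (n + 2) => mu ω (n + 2 + (k : ℕ)) := by
      funext j
      rw [Finset.sum_apply]
      simp [Pi.single_apply]
    rw [e1, e2, cramer_apply, updateCol_transpose, det_transpose, hS]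
  -- Claim B : derivative
  have hB : deriv (hankel (n + 1)) ω = Complex.I * S := by
    have hder := hasDerivAt_det
      (fun ω' => Matrix.of fun j k : Fin (n + 2) => mu ω' ((j : ℕ) + (k : ℕ)))
      (Matrix.of fun p q : Fin (n + 2) => Complex.I * mu ω ((p : ℕ) + (q : ℕ) + 1)) ω
      (fun p q => by simpa using hasDerivAt_mu ((p : ℕ) + (q : ℕ)) ω)
    have hd : deriv (hankel (n + 1)) ω = ∑ q : Fin (n + 2),
        (H.updateCol q (fun p => Complex.I * mu ω ((p : ℕ) + (q : ℕ) + 1))).det := by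
      have := hder.deriv
      exact this
    rw [hd]
    rw [Finset.sum_eq_single (Fin.last (n + 1))]
    · -- main term
      have hu : (fun p : Fin (n + 2) => Complex.I * mu ω ((p : ℕ) + (Fin.last (n + 1) : ℕ) + 1))
          = Complex.I • fun p : Fin (n + 2) => mu ω (n + 2 + (p : ℕ)) := by
        funext p
        simp only [Pi.smul_apply, smul_eq_mul, Fin.val_last]
        congr 2
        omega
      rw [hu, det_updateCol_smul]
      congr 1
      calc (H.updateCol (Fin.last (n + 1)) fun p : Fin (n + 2) => mu ω (n + 2 + (p : ℕ))).det
          = (Hᵀ.updateCol (Fin.last (n + 1)) fun p : Fin (n + 2) => mu ω (n + 2 + (p : ℕ))).det := by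
            rw [hHsymm]
        _ = ((H.updateRow (Fin.last (n + 1)) fun p : Fin (n + 2) => mu ω (n + 2 + (p : ℕ)))ᵀ).det := by
            rw [updateCol_transpose]
        _ = S := by rw [det_transpose, hS]
    · -- other terms vanish
      intro q _ hq
      have hqv : (q : ℕ) < n + 1 := by
        have := q.isLt
        have : (q : ℕ) ≠ n + 1 := fun hc => hq (Fin.ext (by simp [hc]))
        omega
      set q' : Fin (n + 2) := ⟨(q : ℕ) + 1, by omega⟩ with hq'
      have hcol : (fun p : Fin (n + 2) => Complex.I * mu ω ((p : ℕ) + (q : ℕ) + 1))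
          = Complex.I • fun p : Fin (n + 2) => H p q' := by
        funext p
        have hval : (q' : ℕ) = (q : ℕ) + 1 := rfl
        simp only [Pi.smul_apply, smul_eq_mul, hH, of_apply]
        rw [show (p : ℕ) + (q : ℕ) + 1 = (p : ℕ) + (q' : ℕ) by rw [hval]; omega]
      rw [hcol, det_updateCol_smul, det_updateCol_eq_zero
        (show q' ≠ q from fun hc => by
          have h2 : (q' : ℕ) = (q : ℕ) := congrArg Fin.val hc
          have h3 : (q' : ℕ) = (q : ℕ) + 1 := rfl
          omega), mul_zero]
    · simp
  -- Claim A : column operation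
  have hA : hankel n ω * ptil (n + 2) ω x = -(S * ptil (n + 1) ω x) := by
    set P : Matrix (Fin (n + 3)) (Fin (n + 3)) ℂ :=
      Matrix.of (fun j k : Fin (n + 3) =>
        if (k : ℕ) = n + 2 then x ^ (j : ℕ) else mu ω ((j : ℕ) + (k : ℕ))) with hP
    have hPdet : ptil (n + 2) ω x = P.det := rfl
    set c₀ : Fin (n + 3) := ⟨n + 1, by omega⟩ with hc₀
    set c : Fin (n + 3) → ℂ := fun i =>
      if h : (i : ℕ) < n + 2 then w ⟨(i : ℕ), h⟩ else 0 with hc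
    have key := det_updateCol_sum P c₀ c
    have hcc0 : c c₀ = hankel n ω := by
      rw [hc]
      have hlt : ((c₀ : ℕ)) < n + 2 := by simp [hc₀]
      simp only []
      rw [dif_pos hlt]
      have he : (⟨(c₀ : ℕ), hlt⟩ : Fin (n + 2)) = Fin.last (n + 1) := by
        apply Fin.ext; simp [hc₀]
      rw [he, F2]
    have hcolval : (fun k : Fin (n + 3) => ∑ i, c i • P k i)
        = fun k : Fin (n + 3) => if (k : ℕ) = n + 2 then S else 0 := by
      funext k
      have hsum : ∑ i : Fin (n + 3), c i • P k i
          = ∑ i : Fin (n + 2), w i * mu ω ((k : ℕ) + (i : ℕ)) := by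
        rw [Fin.sum_univ_castSucc]
        have hlast : c (Fin.last (n + 2)) = 0 := by
          rw [hc]; simp
        rw [hlast, zero_smul, add_zero]
        refine Finset.sum_congr rfl fun i _ => ?_
        have h1 : c (Fin.castSucc i) = w i := by
          rw [hc]
          have hi : ((Fin.castSucc i : Fin (n + 3)) : ℕ) < n + 2 := by
            simp [i.isLt]
          simp only []
          rw [dif_pos hi]
          congr 1
        have h2 : P k (Fin.castSucc i) = mu ω ((k : ℕ) + (i : ℕ)) := by
          rw [hP]
          simp only [of_apply]
          rw [if_neg (by have := i.isLt; simp; omega)]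
          simp
        rw [h1, h2, smul_eq_mul]
      rw [hsum]
      by_cases hk : (k : ℕ) = n + 2
      · rw [if_pos hk, ← F3]
        refine Finset.sum_congr rfl fun i _ => ?_
        rw [hk]
      · rw [if_neg hk]
        have hkv : (k : ℕ) < n + 2 := by have := k.isLt; omega
        calc ∑ i : Fin (n + 2), w i * mu ω ((k : ℕ) + (i : ℕ))
            = ∑ i, H (⟨(k : ℕ), hkv⟩ : Fin (n + 2)) i * w i := by
              refine Finset.sum_congr rfl fun i _ => ?_
              rw [mul_comm]; rfl
          _ = 0 := F1 _
    rw [hcolval] at key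
    -- evaluate the determinant of the updated matrix
    have hN : (P.updateCol c₀ (fun k : Fin (n + 3) => if (k : ℕ) = n + 2 then S else 0)).det
        = -(S * ptil (n + 1) ω x) := by
      set N := P.updateCol c₀ (fun k : Fin (n + 3) => if (k : ℕ) = n + 2 then S else 0)
        with hNdef
      rw [det_succ_column N c₀]
      rw [Finset.sum_eq_single (Fin.last (n + 2))]
      · have hNval : N (Fin.last (n + 2)) c₀ = S := by
          rw [hNdef, updateCol_self]; simp
        rw [hNval]
        have hsign : ((-1 : ℂ)) ^ ((Fin.last (n + 2) : ℕ) + (c₀ : ℕ)) = -1 :=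
          Odd.neg_one_pow ⟨n + 1, by simp [hc₀]; ring⟩
        rw [hsign]
        have hminor : N.submatrix (Fin.last (n + 2)).succAbove c₀.succAbove
            = Matrix.of (fun j k : Fin (n + 2) =>
              if (k : ℕ) = n + 1 then x ^ (j : ℕ) else mu ω ((j : ℕ) + (k : ℕ))) := by
          ext j k
          rw [submatrix_apply, Fin.succAbove_last, hNdef,
            updateCol_ne (Fin.succAbove_ne c₀ k), hP]
          simp only [of_apply]
          by_cases hk : (k : ℕ) < n + 1
          · have hlt : Fin.castSucc k < c₀ := by
              rw [Fin.lt_def]; simpa [hc₀] using hk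
            rw [Fin.succAbove_of_castSucc_lt _ _ hlt]
            have hv : ((Fin.castSucc k : Fin (n + 3)) : ℕ) = (k : ℕ) := rfl
            rw [if_neg (by omega), if_neg (by omega)]
            simp
          · have hk1 : (k : ℕ) = n + 1 := by have := k.isLt; omega
            have hle : c₀ ≤ Fin.castSucc k := by
              rw [Fin.le_def]; simp [hc₀, hk1]
            rw [Fin.succAbove_of_le_castSucc _ _ hle]
            have hv : ((Fin.succ k : Fin (n + 3)) : ℕ) = n + 2 := by simp [hk1]
            rw [if_pos hv, if_pos hk1]
            simp
        rw [hminor]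
        have : ptil (n + 1) ω x = Matrix.det (Matrix.of (fun j k : Fin (n + 2) =>
            if (k : ℕ) = n + 1 then x ^ (j : ℕ) else mu ω ((j : ℕ) + (k : ℕ)))) := rfl
        rw [← this]
        ring
      · intro b _ hb
        have : N b c₀ = 0 := by
          rw [hNdef, updateCol_self]
          rw [if_neg (fun hc => hb (Fin.ext (by simpa using hc)))]
        rw [this]; ring
      · simp
    rw [hN, hcc0, smul_eq_mul, ← hPdet] at key
    exact key.symm
  rw [hB]
  field_simp
  linear_combination hA - ptil (n + 1) ω x * S * Complex.I_mul_I
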